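/- Every obliviously-computable function f : ℕ^d → ℕ is nondecreasing: if a ≤ b pointwise then f(a) ≤ f(b). -/

import Mathlib

/-- A chemical reaction network with species type `σ`, designated input species
`inputs i` for each of the `d` inputs, an output species, and a leader species. -/
structure CRN (d : ℕ) (σ : Type) [Fintype σ] [DecidableEq σ] where
  /-- Each reaction is a pair `(r, p)` of reactant counts and product counts. -/
  reactions : Finset ((σ → ℕ) × (σ → ℕ))
  inputs : Fin d → σ
  output : σ
  leader : σ
  inputs_inj : Function.Injective inputs
  leader_not_input : ∀ i, inputs i ≠ leader

namespace CRN

variable {d : ℕ} {σ : Type} [Fintype σ] [DecidableEq σ]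

/-- One reaction step: some reaction `(r, p)` with `r ≤ c` pointwise fires,
yielding `c - r + p`. -/
def Step (C : CRN d σ) (c c' : σ → ℕ) : Prop :=
  ∃ rp ∈ C.reactions, rp.1 ≤ c ∧ c' = c - rp.1 + rp.2

/-- Reachability by a finite sequence of reaction steps. -/
def Reachable (C : CRN d σ) : (σ → ℕ) → (σ → ℕ) → Prop :=
  Relation.ReflTransGen C.Step

/-- The initial configuration encoding input `x`: count `x i` of input species
`inputs i`, count 1 of the leader, count 0 of everything else. -/
def init (C : CRN d σ) (x : Fin d → ℕ) : σ → ℕ :=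
  fun s => (∑ i, if C.inputs i = s then x i else 0) + (if s = C.leader then 1 else 0)

/-- A configuration is stable if the output count never changes from it. -/
def Stable (C : CRN d σ) (c : σ → ℕ) : Prop :=
  ∀ c', C.Reachable c c' → c' C.output = c C.output

/-- `C` stably computes `f` if from every configuration reachable from an initial
configuration, a stable configuration with correct output count is reachable. -/
def StablyComputes (C : CRN d σ) (f : (Fin d → ℕ) → ℕ) : Prop :=
  ∀ x c, C.Reachable (C.init x) c →
    ∃ o, C.Reachable c o ∧ C.Stable o ∧ o C.output = f x

/-- A CRN is output-oblivious if the output species is never a reactant. -/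
def OutputOblivious (C : CRN d σ) : Prop :=
  ∀ rp ∈ C.reactions, rp.1 C.output = 0

/-- A CRN is output-monotonic if no reaction decreases the output species count. -/
def OutputMonotonic (C : CRN d σ) : Prop :=
  ∀ rp ∈ C.reactions, rp.1 C.output ≤ rp.2 C.output

end CRN

/-- `f` is obliviously-computable if some output-oblivious CRN stably computes it. -/
def ObliviouslyComputable {d : ℕ} (f : (Fin d → ℕ) → ℕ) : Prop :=
  ∃ (n : ℕ) (C : CRN d (Fin n)), C.OutputOblivious ∧ C.StablyComputes f


lemma CRN.step_add {d n : ℕ} (C : CRN d (Fin n)) (e : Fin n → ℕ) {c c' : Fin n → ℕ}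
    (h : C.Step c c') : C.Step (c + e) (c' + e) := by
  obtain ⟨rp, hrp, hle, heq⟩ := h
  refine ⟨rp, hrp, fun s => le_trans (hle s) (Nat.le_add_right _ _), ?_⟩
  subst heq
  funext s
  have h := hle s
  simp only [Pi.add_apply, Pi.sub_apply] at h ⊢
  omega

lemma CRN.reachable_add {d n : ℕ} (C : CRN d (Fin n)) (e : Fin n → ℕ) {c c' : Fin n → ℕ}
    (h : C.Reachable c c') : C.Reachable (c + e) (c' + e) :=
  Relation.ReflTransGen.lift (· + e) (fun _ _ hs => C.step_add e hs) _ _ h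

lemma CRN.output_mono {d n : ℕ} (C : CRN d (Fin n)) (hob : C.OutputOblivious)
    {c c' : Fin n → ℕ} (h : C.Reachable c c') : c C.output ≤ c' C.output := by
  induction h with
  | refl => exact le_refl _
  | tail _ hstep ih =>
      obtain ⟨rp, hrp, hle, heq⟩ := hstep
      subst heq
      have h0 := hob rp hrp
      simp only [Pi.add_apply, Pi.sub_apply, h0]
      omega


/-- Every obliviously-computable function is nondecreasing. -/
theorem obliviouslyComputable_monotone {d : ℕ} (f : (Fin d → ℕ) → ℕ)
    (hf : ObliviouslyComputable f) :
    ∀ a b : Fin d → ℕ, a ≤ b → f a ≤ f b := by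
  intro a b hab
  obtain ⟨n, C, hob, hsc⟩ := hf
  obtain ⟨o, hro, _, hfo⟩ := hsc a _ Relation.ReflTransGen.refl
  set e : Fin n → ℕ := fun s => ∑ i, if C.inputs i = s then b i - a i else 0 with he
  have hinit : C.init b = C.init a + e := by
    funext s
    simp only [CRN.init, Pi.add_apply, he]
    have hsum : (∑ i, if C.inputs i = s then b i else 0)
        = (∑ i, if C.inputs i = s then a i else 0) + ∑ i, if C.inputs i = s then b i - a i else 0 := by
      rw [← Finset.sum_add_distrib]
      refine Finset.sum_congr rfl fun i _ => ?_
      have hi : a i ≤ b i := hab i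
      split <;> omega
    omega
  have hreach : C.Reachable (C.init b) (o + e) := by
    rw [hinit]; exact C.reachable_add e hro
  obtain ⟨o', hro', _, hfo'⟩ := hsc b _ hreach
  have h1 : (o + e) C.output ≤ o' C.output := C.output_mono hob hro'
  have h2 : o C.output ≤ (o + e) C.output := Nat.le_add_right _ _
  omega
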